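/- Modified greedy for knapsack is a 1/2-approximation: running greedy-by-density and then comparing with the single most valuable item that fits, the better of the two solutions has value at least OPT/2. -/

import Mathlib

/-- The set chosen by the greedy algorithm that processes items in index order
(assumed sorted by nonincreasing density) and adds each item if it still fits. -/
noncomputable def greedySet (n : ℕ) (D : Fin n → ℝ) (W : ℝ) : Finset (Fin n) :=
  (List.finRange n).foldl
    (fun S i => if ∑ j ∈ insert i S, D j ≤ W then insert i S else S) ∅

section Aux

variable {n : ℕ} (D : Fin n → ℝ) (W : ℝ)

private noncomputable def gstep (S : Finset (Fin n)) (i : Fin n) : Finset (Fin n) :=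
  if ∑ j ∈ insert i S, D j ≤ W then insert i S else S

private lemma subset_gstep (S : Finset (Fin n)) (i : Fin n) : S ⊆ gstep D W S i := by
  unfold gstep; split_ifs
  · exact Finset.subset_insert _ _
  · exact Finset.Subset.refl _

private lemma subset_foldl (l : List (Fin n)) (S : Finset (Fin n)) :
    S ⊆ l.foldl (gstep D W) S := by
  induction l generalizing S with
  | nil => simp
  | cons a l ih =>
    rw [List.foldl_cons]
    exact (subset_gstep D W S a).trans (ih _)

private lemma mem_foldl {l : List (Fin n)} {S : Finset (Fin n)} {i : Fin n}
    (h : i ∈ l.foldl (gstep D W) S) : i ∈ S ∨ i ∈ l := by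
  induction l generalizing S with
  | nil => simpa using h
  | cons a l ih =>
    rw [List.foldl_cons] at h
    rcases ih h with h' | h'
    · unfold gstep at h'
      split_ifs at h' with hc
      · rcases Finset.mem_insert.mp h' with rfl | h''
        · exact Or.inr List.mem_cons_self
        · exact Or.inl h''
      · exact Or.inl h'
    · exact Or.inr (List.mem_cons_of_mem _ h')

end Aux

theorem stmt_18 (n : ℕ) (hn : 0 < n) (v D : Fin n → ℝ) (W : ℝ) (hW : 0 < W)
    (hv : ∀ i, 0 < v i) (hD : ∀ i, 0 < D i ∧ D i ≤ W)
    (hsorted : ∀ i j : Fin n, i ≤ j → v j / D j ≤ v i / D i)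
    (OPT : ℝ)
    (hOPT : IsGreatest {x : ℝ | ∃ S : Finset (Fin n),
      (∑ i ∈ S, D i ≤ W) ∧ x = ∑ i ∈ S, v i} OPT) :
    OPT / 2 ≤
      max (∑ i ∈ greedySet n D W, v i)
        (Finset.univ.sup' (Finset.univ_nonempty_iff.mpr ⟨⟨0, hn⟩⟩) v) := by
  set G := greedySet n D W with hGdef
  have hGfold : G = (List.finRange n).foldl (gstep D W) ∅ := rfl
  obtain ⟨⟨T, hTfeas, hTval⟩, hub⟩ := hOPT
  have hOPTnonneg : 0 ≤ OPT := by
    apply hub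
    exact ⟨∅, by simp [le_of_lt hW]⟩
  set M := max (∑ i ∈ G, v i)
      (Finset.univ.sup' (Finset.univ_nonempty_iff.mpr ⟨⟨0, hn⟩⟩) v) with hM
  by_cases hall : ∀ i : Fin n, i ∈ G
  · -- greedy took everything
    have h1 : OPT ≤ ∑ i ∈ G, v i := by
      rw [hTval]
      apply Finset.sum_le_sum_of_subset_of_nonneg
      · intro i _; exact hall i
      · intro i _ _; exact (hv i).le
    have : OPT ≤ M := h1.trans (le_max_left _ _)
    linarith
  · push_neg at hall
    -- k : minimal index not in G
    have hne : (Finset.univ.filter (fun i => i ∉ G)).Nonempty := by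
      obtain ⟨i, hi⟩ := hall
      exact ⟨i, by simp [hi]⟩
    set k : Fin n := (Finset.univ.filter (fun i => i ∉ G)).min' hne with hkdef
    have hkG : k ∉ G := by
      have := Finset.min'_mem _ hne
      simp only [Finset.mem_filter] at this
      exact this.2
    have hlt : ∀ i : Fin n, i < k → i ∈ G := by
      intro i hi
      by_contra hiG
      have : k ≤ i := Finset.min'_le _ _ (by simp [hiG])
      exact absurd hi (not_lt.mpr this)
    -- Set after processing first k items
    set Sk : Finset (Fin n) := ((List.finRange n).take k.val).foldl (gstep D W) ∅ with hSk
    have hsplit : G = ((List.finRange n).drop k.val).foldl (gstep D W) Sk := by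
      rw [hGfold, ← List.foldl_append, List.take_append_drop]
    have hdrop : (List.finRange n).drop k.val
        = k :: (List.finRange n).drop (k.val + 1) := by
      rw [List.drop_eq_getElem_cons (by simp [k.isLt])]
      congr 1
      simp
    -- membership facts
    have hSk_lt : ∀ i ∈ Sk, i.val < k.val := by
      intro i hi
      rcases mem_foldl D W hi with h | h
      · simp at h
      · rw [List.mem_take_iff_getElem] at h
        obtain ⟨j, hj, hji⟩ := h
        have hval : i.val = j := by rw [← hji]; simp
        simp only [List.length_finRange] at hj
        omega
    have hSk_eq : Sk = Finset.univ.filter (fun i => i.val < k.val) := by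
      ext i
      simp only [Finset.mem_filter, Finset.mem_univ, true_and]
      constructor
      · exact hSk_lt i
      · intro hik
        have hiG : i ∈ G := hlt i (Fin.lt_def.mpr hik)
        rw [hsplit] at hiG
        rcases mem_foldl D W hiG with h | h
        · exact h
        · rw [List.mem_drop_iff_getElem] at h
          obtain ⟨j, hj, hji⟩ := h
          have hval : i.val = k.val + j := by rw [← hji]; simp
          omega
    -- rejection inequality
    have hrej : ¬ (∑ j ∈ insert k Sk, D j ≤ W) := by
      intro hc
      apply hkG
      rw [hsplit, hdrop, List.foldl_cons]
      apply subset_foldl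
      unfold gstep
      rw [if_pos hc]
      exact Finset.mem_insert_self _ _
    have hkSk : k ∉ Sk := fun h => lt_irrefl _ (hSk_lt k h)
    have hrej' : W < D k + ∑ j ∈ Sk, D j := by
      push_neg at hrej
      rwa [Finset.sum_insert hkSk] at hrej
    -- density bound
    set ρ : ℝ := v k / D k with hρ
    have hρpos : 0 < ρ := div_pos (hv k) (hD k).1
    have hbound : OPT ≤ ∑ i ∈ Sk, v i + v k := by
      rw [hTval]
      have hTsplit : ∑ i ∈ T, v i
          = ∑ i ∈ T.filter (fun i => i.val < k.val), v i
            + ∑ i ∈ T.filter (fun i => ¬ i.val < k.val), v i :=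
        (Finset.sum_filter_add_sum_filter_not T _ v).symm
      have hDsplit : ∑ i ∈ T, D i
          = ∑ i ∈ T.filter (fun i => i.val < k.val), D i
            + ∑ i ∈ T.filter (fun i => ¬ i.val < k.val), D i :=
        (Finset.sum_filter_add_sum_filter_not T _ D).symm
      -- items with index ≥ k have density ≤ ρ
      have hhigh : ∑ i ∈ T.filter (fun i => ¬ i.val < k.val), v i
          ≤ ρ * ∑ i ∈ T.filter (fun i => ¬ i.val < k.val), D i := by
        rw [Finset.mul_sum]
        apply Finset.sum_le_sum
        intro i hi
        simp only [Finset.mem_filter, not_lt] at hi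
        have hki : k ≤ i := Fin.le_def.mpr hi.2
        have hd : v i / D i ≤ ρ := hsorted k i hki
        exact (div_le_iff₀ (hD i).1).mp hd
      -- low-index part of T is dominated by Sk on v - ρ D
      have hlowsub : T.filter (fun i => i.val < k.val) ⊆ Sk := by
        rw [hSk_eq]
        intro i hi
        simp only [Finset.mem_filter] at hi ⊢
        exact ⟨Finset.mem_univ i, hi.2⟩
      have hlow : ∑ i ∈ T.filter (fun i => i.val < k.val), (v i - ρ * D i)
          ≤ ∑ i ∈ Sk, (v i - ρ * D i) := by
        apply Finset.sum_le_sum_of_subset_of_nonneg hlowsub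
        intro i hi _
        rw [hSk_eq, Finset.mem_filter] at hi
        have hik : i ≤ k := le_of_lt (Fin.lt_def.mpr hi.2)
        have hd : ρ ≤ v i / D i := hsorted i k hik
        have := (le_div_iff₀ (hD i).1).mp hd
        linarith
      rw [Finset.sum_sub_distrib, ← Finset.mul_sum,
        Finset.sum_sub_distrib, ← Finset.mul_sum] at hlow
      have hfeas2 : ρ * (∑ i ∈ T.filter (fun i => i.val < k.val), D i
          + ∑ i ∈ T.filter (fun i => ¬ i.val < k.val), D i) ≤ ρ * W := by
        apply mul_le_mul_of_nonneg_left _ hρpos.le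
        rw [← hDsplit]; exact hTfeas
      rw [mul_add] at hfeas2
      have hrej2 : ρ * W ≤ ρ * (D k + ∑ j ∈ Sk, D j) :=
        mul_le_mul_of_nonneg_left hrej'.le hρpos.le
      rw [mul_add] at hrej2
      have hρDk : ρ * D k = v k := div_mul_cancel₀ _ (ne_of_gt (hD k).1)
      linarith
    have h1 : ∑ i ∈ Sk, v i ≤ M := by
      refine le_trans ?_ (le_max_left _ _)
      apply Finset.sum_le_sum_of_subset_of_nonneg
      · rw [hSk_eq]
        intro i hi
        simp only [Finset.mem_filter, Finset.mem_univ, true_and] at hi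
        exact hlt i (Fin.lt_def.mpr hi)
      · intro i _ _; exact (hv i).le
    have h2 : v k ≤ M :=
      le_trans (Finset.le_sup' v (Finset.mem_univ k)) (le_max_right _ _)
    linarith
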